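/- Fix θ ∈ (0,1) and a sequence q = q_n with q = Θ(n^{2(θ−1)}), and let G ~ ER(n,q) with average number of edges k̄ = q·C(n,2). For any sequence of non-adaptive test designs with t = t_n tests and any decoders Ĝ, if the error probability p_e = P[Ĝ ≠ G] tends to 0 as n → ∞, then for every η > 0 one has t ≥ (1−η)·k̄·log₂(1/q) for all sufficiently large n. -/

import Mathlib

open scoped BigOperators Classical
open Finset Filter

noncomputable section

/-- The set of all potential edges: unordered pairs of distinct nodes of `Fin n`. -/
def allPairs (n : ℕ) : Finset (Sym2 (Fin n)) :=
  Finset.univ.filter fun e => ¬ e.IsDiag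

/-- Both endpoints of the pair `e` lie in the test `L`. -/
def pairIn {n : ℕ} (e : Sym2 (Fin n)) (L : Finset (Fin n)) : Prop :=
  ∀ v ∈ e, v ∈ L

/-- The test `L` covers some edge of the edge set `E` (positive outcome `Y = 1`). -/
def covers {n : ℕ} (E : Finset (Sym2 (Fin n))) (L : Finset (Fin n)) : Prop :=
  ∃ e ∈ E, pairIn e L

/-- ER(n,q) probability weight of a given edge set `E`. -/
def erWeight (n : ℕ) (q : ℝ) (E : Finset (Sym2 (Fin n))) : ℝ :=
  q ^ E.card * (1 - q) ^ ((allPairs n).card - E.card)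

/-- Probability of an event under the Erdős–Rényi random graph ER(n,q). -/
def erProb (n : ℕ) (q : ℝ) (A : Finset (Sym2 (Fin n)) → Prop) : ℝ :=
  ∑ E ∈ (allPairs n).powerset, if A E then erWeight n q E else 0

/-- Bernoulli(p) probability weight of a single test `L ⊆ {1,…,n}`. -/
def testWeight (n : ℕ) (p : ℝ) (L : Finset (Fin n)) : ℝ :=
  p ^ L.card * (1 - p) ^ (n - L.card)

/-- Probability of an event for a single Bernoulli(p) test. -/
def bernProb (n : ℕ) (p : ℝ) (A : Finset (Fin n) → Prop) : ℝ :=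
  ∑ L : Finset (Fin n), if A L then testWeight n p L else 0

/-- Probability weight of `t` i.i.d. Bernoulli(p) tests. -/
def testsWeight (n t : ℕ) (p : ℝ) (Ls : Fin t → Finset (Fin n)) : ℝ :=
  ∏ i, testWeight n p (Ls i)

/-- Probability of an event for `t` i.i.d. Bernoulli(p) tests. -/
def bernTestsProb (n t : ℕ) (p : ℝ) (A : (Fin t → Finset (Fin n)) → Prop) : ℝ :=
  ∑ Ls : Fin t → Finset (Fin n), if A Ls then testsWeight n t p Ls else 0

/-- Joint probability over an ER(n,q) graph and `t` i.i.d. Bernoulli(p) tests. -/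
def erTestsProb (n t : ℕ) (q p : ℝ)
    (A : Finset (Sym2 (Fin n)) → (Fin t → Finset (Fin n)) → Prop) : ℝ :=
  ∑ E ∈ (allPairs n).powerset, ∑ Ls : Fin t → Finset (Fin n),
    if A E Ls then erWeight n q E * testsWeight n t p Ls else 0

/-- Degree of node `v` in the edge set `E`. -/
def degOf {n : ℕ} (E : Finset (Sym2 (Fin n))) (v : Fin n) : ℕ :=
  (E.filter fun e => v ∈ e).card

/-- Maximum degree of the edge set `E`. -/
def maxDeg {n : ℕ} (E : Finset (Sym2 (Fin n))) : ℕ :=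
  Finset.univ.sup (degOf E)

/-- Average number of edges of ER(n, q n): `k̄ = q·C(n,2)`. -/
def kbar (q : ℕ → ℝ) (n : ℕ) : ℝ := q n * (n.choose 2 : ℝ)

/-- Two pairs are vertex-disjoint. -/
def sym2Disjoint {n : ℕ} (e e' : Sym2 (Fin n)) : Prop := ∀ v, v ∈ e → v ∉ e'

lemma sum_pow_card {α : Type*} (S : Finset α) (a b : ℝ) :
    ∑ E ∈ S.powerset, a ^ E.card * b ^ (S.card - E.card) = (a + b) ^ S.card := by
  have h := Finset.prod_add (fun _ : α => a) (fun _ : α => b) S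
  simp only [Finset.prod_const] at h
  rw [h]
  apply Finset.sum_congr rfl
  intro E hE
  rw [Finset.mem_powerset] at hE
  rw [Finset.card_sdiff_of_subset hE]

lemma allPairs_card (n : ℕ) : (allPairs n).card = n.choose 2 := by
  classical
  have := Sym2.card_subtype_not_diag (α := Fin n)
  rw [Fintype.card_subtype] at this
  simp only [Fintype.card_fin] at this
  rw [allPairs]
  convert this using 2

lemma erWeight_nonneg {n : ℕ} {q : ℝ} (hq0 : 0 ≤ q) (hq1 : q ≤ 1)
    (E : Finset (Sym2 (Fin n))) : 0 ≤ erWeight n q E := by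
  have h1 : 0 ≤ 1 - q := by linarith
  unfold erWeight
  positivity

lemma sum_erWeight (n : ℕ) (q : ℝ) :
    ∑ E ∈ (allPairs n).powerset, erWeight n q E = 1 := by
  unfold erWeight
  rw [sum_pow_card]
  norm_num

lemma erProb_compl (n : ℕ) (q : ℝ) (A : Finset (Sym2 (Fin n)) → Prop) :
    erProb n q A + erProb n q (fun E => ¬ A E) = 1 := by
  unfold erProb
  rw [← Finset.sum_add_distrib]
  rw [← sum_erWeight n q]
  apply Finset.sum_congr rfl
  intro E _
  by_cases h : A E <;> simp [h]

lemma tail_bound (n : ℕ) (q s τ : ℝ) (hq0 : 0 ≤ q) (hq1 : q ≤ 1)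
    (hs0 : 0 < s) (hs1 : s ≤ 1) (hτ : 0 ≤ τ) :
    ∑ E ∈ (allPairs n).powerset, (if (E.card : ℝ) ≤ τ then erWeight n q E else 0)
      ≤ s ^ (-τ) * (q * s + (1 - q)) ^ (allPairs n).card := by
  have hq1' : 0 ≤ 1 - q := by linarith
  have hrw : s ^ (-τ) * (q * s + (1 - q)) ^ (allPairs n).card
      = ∑ E ∈ (allPairs n).powerset,
        s ^ (-τ) * ((q * s) ^ E.card * (1 - q) ^ ((allPairs n).card - E.card)) := by
    rw [← Finset.mul_sum, sum_pow_card]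
  rw [hrw]
  apply Finset.sum_le_sum
  intro E _
  by_cases h : (E.card : ℝ) ≤ τ
  · simp only [h, if_true]
    have h1 : (1 : ℝ) ≤ s ^ (-τ) * s ^ E.card := by
      rw [← Real.rpow_natCast s E.card, ← Real.rpow_add hs0]
      calc (1:ℝ) = s ^ (0:ℝ) := (Real.rpow_zero s).symm
        _ ≤ s ^ (-τ + (E.card : ℝ)) := by
            apply Real.rpow_le_rpow_of_exponent_ge hs0 hs1
            linarith
    have hw : 0 ≤ erWeight n q E := erWeight_nonneg hq0 hq1 E
    calc erWeight n q E = 1 * erWeight n q E := (one_mul _).symm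
      _ ≤ (s ^ (-τ) * s ^ E.card) * erWeight n q E := by
          exact mul_le_mul_of_nonneg_right h1 hw
      _ = s ^ (-τ) * ((q * s) ^ E.card * (1 - q) ^ ((allPairs n).card - E.card)) := by
          rw [erWeight, mul_pow]; ring
  · simp only [h, if_false]
    have : 0 ≤ s ^ (-τ) := Real.rpow_nonneg hs0.le _
    positivity

lemma count_bound (n t : ℕ) (q τ : ℝ) (hq0 : 0 < q) (hq1 : q ≤ 1) (hτ : 0 ≤ τ)
    (Ls : Fin t → Finset (Fin n)) (dec : (Fin t → Prop) → Finset (Sym2 (Fin n))) :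
    ∑ E ∈ (allPairs n).powerset,
      (if dec (fun i => covers E (Ls i)) = E ∧ τ < (E.card : ℝ) then erWeight n q E else 0)
      ≤ (2 : ℝ) ^ t * q ^ τ := by
  classical
  rw [← Finset.sum_filter]
  set T := (allPairs n).powerset.filter
      (fun E => dec (fun i => covers E (Ls i)) = E ∧ τ < (E.card : ℝ)) with hT
  have hcard : T.card ≤ 2 ^ t := by
    have hinj : Set.InjOn (fun E => (fun i => covers E (Ls i)) : Finset (Sym2 (Fin n)) → (Fin t → Prop)) T := by
      intro E1 h1 E2 h2 heq
      have h1' := (Finset.mem_filter.mp h1).2.1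
      have h2' := (Finset.mem_filter.mp h2).2.1
      calc E1 = dec (fun i => covers E1 (Ls i)) := h1'.symm
        _ = dec (fun i => covers E2 (Ls i)) := by exact congrArg dec heq
        _ = E2 := h2'
    have := Finset.card_le_card_of_injOn _ (fun E _ => Finset.mem_univ _) hinj
    calc T.card ≤ (Finset.univ : Finset (Fin t → Prop)).card := this
      _ = 2 ^ t := by
          rw [Finset.card_univ, Fintype.card_fun]
          simp [Fintype.card_prop]
  have hbound : ∀ E ∈ T, erWeight n q E ≤ q ^ τ := by
    intro E hE
    have hlt := (Finset.mem_filter.mp hE).2.2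
    have h1 : erWeight n q E ≤ q ^ E.card := by
      rw [erWeight]
      have : (1 - q) ^ ((allPairs n).card - E.card) ≤ 1 :=
        pow_le_one₀ (by linarith) (by linarith)
      calc q ^ E.card * (1 - q) ^ ((allPairs n).card - E.card)
          ≤ q ^ E.card * 1 := by
            exact mul_le_mul_of_nonneg_left this (by positivity)
        _ = q ^ E.card := mul_one _
    have h2 : q ^ E.card ≤ q ^ τ := by
      rw [← Real.rpow_natCast q E.card]
      exact Real.rpow_le_rpow_of_exponent_ge hq0 hq1 hlt.le
    linarith
  calc ∑ E ∈ T, erWeight n q E ≤ T.card • q ^ τ := Finset.sum_le_card_nsmul _ _ _ hbound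
    _ = (T.card : ℝ) * q ^ τ := nsmul_eq_mul _ _
    _ ≤ (2 : ℝ) ^ t * q ^ τ := by
        apply mul_le_mul_of_nonneg_right _ (Real.rpow_nonneg hq0.le _)
        calc (T.card : ℝ) ≤ ((2 ^ t : ℕ) : ℝ) := Nat.cast_le.mpr hcard
          _ = (2 : ℝ) ^ t := by push_cast; ring

lemma key_bound (n t : ℕ) (q δ : ℝ) (hq0 : 0 < q) (hq1 : q ≤ 1)
    (hδ0 : 0 < δ) (hδ1 : δ ≤ 1/2)
    (D : (Fin t → Finset (Fin n)) → ℝ) (hD0 : ∀ Ls, 0 ≤ D Ls)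
    (hD1 : ∑ Ls : Fin t → Finset (Fin n), D Ls = 1)
    (dec : (Fin t → Finset (Fin n)) → (Fin t → Prop) → Finset (Sym2 (Fin n))) :
    1 - ∑ Ls : Fin t → Finset (Fin n),
        D Ls * erProb n q (fun E => dec Ls (fun i => covers E (Ls i)) ≠ E)
      ≤ Real.exp (-(δ + (1 - δ) * Real.log (1 - δ)) * (q * ((allPairs n).card : ℝ)))
        + (2:ℝ) ^ t * q ^ ((1 - δ) * (q * ((allPairs n).card : ℝ))) := by
  classical
  set N : ℕ := (allPairs n).card with hN
  set k : ℝ := q * (N : ℝ) with hk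
  set τ : ℝ := (1 - δ) * k with hτdef
  set s : ℝ := 1 - δ with hs
  have hk0 : 0 ≤ k := by positivity
  have hτ0 : 0 ≤ τ := by rw [hτdef]; nlinarith
  have hs0 : 0 < s := by rw [hs]; linarith
  have hs1 : s ≤ 1 := by rw [hs]; linarith
  set B : ℝ := s ^ (-τ) * (q * s + (1 - q)) ^ N + (2:ℝ) ^ t * q ^ τ with hB
  -- Step 1: per-design success bound
  have hsucc : ∀ Ls : Fin t → Finset (Fin n),
      erProb n q (fun E => dec Ls (fun i => covers E (Ls i)) = E) ≤ B := by
    intro Ls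
    have hsplit : erProb n q (fun E => dec Ls (fun i => covers E (Ls i)) = E)
        ≤ (∑ E ∈ (allPairs n).powerset, (if (E.card : ℝ) ≤ τ then erWeight n q E else 0))
          + ∑ E ∈ (allPairs n).powerset,
            (if dec Ls (fun i => covers E (Ls i)) = E ∧ τ < (E.card : ℝ) then erWeight n q E else 0) := by
      rw [erProb, ← Finset.sum_add_distrib]
      apply Finset.sum_le_sum
      intro E _
      have hw : 0 ≤ erWeight n q E := erWeight_nonneg hq0.le hq1 E
      by_cases hc : dec Ls (fun i => covers E (Ls i)) = E
      · by_cases hle : (E.card : ℝ) ≤ τ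
        · simp [hc, hle, not_lt.mpr hle, hw]
        · simp [hc, hle, lt_of_not_ge hle, hw]
      · by_cases hle : (E.card : ℝ) ≤ τ <;> simp [hc, hle, hw]
    refine hsplit.trans ?_
    rw [hB]
    gcongr
    · exact tail_bound n q s τ hq0.le hq1 hs0 hs1 hτ0
    · exact count_bound n t q τ hq0 hq1 hτ0 Ls (dec Ls)
  -- Step 2: 1 - p_e = average success ≤ B
  have hstep2 : 1 - ∑ Ls : Fin t → Finset (Fin n),
      D Ls * erProb n q (fun E => dec Ls (fun i => covers E (Ls i)) ≠ E) ≤ B := by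
    have hcompl : ∀ Ls : Fin t → Finset (Fin n),
        erProb n q (fun E => dec Ls (fun i => covers E (Ls i)) = E)
          + erProb n q (fun E => dec Ls (fun i => covers E (Ls i)) ≠ E) = 1 :=
      fun Ls => erProb_compl n q _
    have h1 : 1 - ∑ Ls : Fin t → Finset (Fin n),
        D Ls * erProb n q (fun E => dec Ls (fun i => covers E (Ls i)) ≠ E)
        = ∑ Ls : Fin t → Finset (Fin n),
          D Ls * erProb n q (fun E => dec Ls (fun i => covers E (Ls i)) = E) := by
      rw [← hD1, ← Finset.sum_sub_distrib]
      apply Finset.sum_congr rfl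
      intro Ls _
      have h2 : erProb n q (fun E => dec Ls (fun i => covers E (Ls i)) = E)
          = 1 - erProb n q (fun E => dec Ls (fun i => covers E (Ls i)) ≠ E) := by
        linarith [hcompl Ls]
      rw [h2]; ring
    rw [h1]
    calc ∑ Ls : Fin t → Finset (Fin n),
          D Ls * erProb n q (fun E => dec Ls (fun i => covers E (Ls i)) = E)
        ≤ ∑ Ls : Fin t → Finset (Fin n), D Ls * B := by
          apply Finset.sum_le_sum
          intro Ls _
          exact mul_le_mul_of_nonneg_left (hsucc Ls) (hD0 Ls)
      _ = B := by rw [← Finset.sum_mul, hD1, one_mul]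
  refine hstep2.trans ?_
  rw [hB]
  gcongr
  · -- first term of B ≤ exp(...)
    have e1 : s ^ (-τ) = Real.exp (Real.log s * (-τ)) := Real.rpow_def_of_pos hs0 _
    have e2 : (q * s + (1 - q)) ^ N ≤ Real.exp ((N : ℝ) * (-(q * δ))) := by
      have hb0 : 0 ≤ q * s + (1 - q) := by rw [hs]; nlinarith
      have hb1 : q * s + (1 - q) ≤ Real.exp (-(q * δ)) := by
        have := Real.add_one_le_exp (-(q * δ))
        rw [hs]; nlinarith
      calc (q * s + (1 - q)) ^ N ≤ (Real.exp (-(q * δ))) ^ N := pow_le_pow_left₀ hb0 hb1 N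
        _ = Real.exp ((N : ℝ) * (-(q * δ))) := (Real.exp_nat_mul _ N).symm
    calc s ^ (-τ) * (q * s + (1 - q)) ^ N
        ≤ Real.exp (Real.log s * (-τ)) * Real.exp ((N : ℝ) * (-(q * δ))) := by
          rw [e1]
          exact mul_le_mul_of_nonneg_left e2 (Real.exp_pos _).le
      _ = Real.exp (Real.log s * (-τ) + (N : ℝ) * (-(q * δ))) := (Real.exp_add _ _).symm
      _ = Real.exp (-(δ + (1 - δ) * Real.log (1 - δ)) * k) := by
          congr 1
          rw [hτdef, hs, hk]
          ring

/-- algorithm-independent converse, Theorem 1.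
Fix `θ ∈ (0,1)` and `q = Θ(n^{2(θ−1)})`; let `G ~ ER(n,q)` with `k̄ = q·C(n,2)`.
For any sequence of (possibly randomized) non-adaptive test designs with `t n` tests and
any decoders, if the error probability tends to `0`, then for every `η > 0` one has
`t n ≥ (1−η)·k̄·log₂(1/q)` for all sufficiently large `n`. -/
theorem statement0
    (θ : ℝ) (hθ0 : 0 < θ) (hθ1 : θ < 1)
    (q : ℕ → ℝ) (hq01 : ∀ n, 0 ≤ q n ∧ q n ≤ 1)
    (c₁ c₂ : ℝ) (hc₁ : 0 < c₁)
    (hq : ∀ n : ℕ, c₁ * (n : ℝ) ^ (2 * (θ - 1)) ≤ q n ∧ q n ≤ c₂ * (n : ℝ) ^ (2 * (θ - 1)))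
    (t : ℕ → ℕ)
    -- a randomized non-adaptive test design: a probability distribution over test collections
    (D : (n : ℕ) → (Fin (t n) → Finset (Fin n)) → ℝ)
    (hD0 : ∀ n Ls, 0 ≤ D n Ls)
    (hD1 : ∀ n, ∑ Ls : Fin (t n) → Finset (Fin n), D n Ls = 1)
    -- a decoder: a function of the tests and their outcomes
    (dec : (n : ℕ) → (Fin (t n) → Finset (Fin n)) → (Fin (t n) → Prop) → Finset (Sym2 (Fin n)))
    -- the error probability tends to zero
    (hpe : Tendsto (fun n => ∑ Ls : Fin (t n) → Finset (Fin n),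
        D n Ls * erProb n (q n) (fun E => dec n Ls (fun i => covers E (Ls i)) ≠ E))
      atTop (nhds 0)) :
    ∀ η : ℝ, 0 < η →
      ∀ᶠ n : ℕ in atTop, (1 - η) * (kbar q n * Real.logb 2 (1 / q n)) ≤ (t n : ℝ) := by
  intro η hη
  by_contra hcon
  rw [Filter.not_eventually] at hcon
  -- parameters
  set δ : ℝ := min η 1 / 2 with hδdef
  have hδ0 : 0 < δ := by
    rw [hδdef]; have := lt_min hη one_pos; linarith
  have hδ1 : δ ≤ 1/2 := by
    rw [hδdef]; have := min_le_right η 1; linarith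
  have hηδ : 2 * δ ≤ η := by
    rw [hδdef]; have := min_le_left η 1; linarith
  set ε0 : ℝ := δ + (1 - δ) * Real.log (1 - δ) with hεdef
  have h1δ : 0 < 1 - δ := by linarith
  have hε0 : 0 < ε0 := by
    have hne : (1 - δ)⁻¹ ≠ 1 := by
      intro h
      rw [inv_eq_one] at h
      linarith
    have h2 : -Real.log (1 - δ) < (1 - δ)⁻¹ - 1 := by
      have h3 := Real.log_lt_sub_one_of_pos (inv_pos.mpr h1δ) hne
      rwa [Real.log_inv] at h3
    have h4 : (1 - δ) * ((1 - δ)⁻¹ - 1) = δ := by field_simp; ring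
    have h5 := mul_lt_mul_of_pos_left h2 h1δ
    rw [h4] at h5
    rw [hεdef]; nlinarith
  -- q → 0
  have hqto : Tendsto q atTop (nhds 0) := by
    have hexp : (0:ℝ) < 2 * (1 - θ) := by linarith
    have h1 : Tendsto (fun x : ℝ => x ^ (-(2 * (1 - θ)))) atTop (nhds 0) :=
      tendsto_rpow_neg_atTop hexp
    have h2 : Tendsto (fun n : ℕ => (n : ℝ) ^ (2 * (θ - 1))) atTop (nhds 0) := by
      have h3 := h1.comp (tendsto_natCast_atTop_atTop (R := ℝ))
      convert h3 using 2 with n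
      simp only [Function.comp_apply]
      congr 1
      ring
    have h4 := h2.const_mul c₂
    rw [mul_zero] at h4
    exact squeeze_zero (fun n => (hq01 n).1) (fun n => (hq n).2) h4
  have hqhalf : ∀ᶠ n in atTop, q n ≤ 1/2 :=
    (hqto.eventually_lt_const (by norm_num : (0:ℝ) < 1/2)).mono fun n h => h.le
  have hq0pos : ∀ᶠ n : ℕ in atTop, 0 < q n := by
    filter_upwards [eventually_ge_atTop 1] with n hn
    have hn0 : (0:ℝ) < (n:ℝ) := by exact_mod_cast hn
    have := (hq n).1
    have : 0 < c₁ * (n:ℝ) ^ (2 * (θ - 1)) := by positivity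
    linarith [(hq n).1]
  -- kbar → ∞
  have hk_lb : ∀ᶠ n : ℕ in atTop, c₁/4 * (n:ℝ) ^ (2*θ) ≤ kbar q n := by
    filter_upwards [eventually_ge_atTop 2] with n hn
    have hn2 : (2:ℝ) ≤ (n:ℝ) := by exact_mod_cast hn
    have hn0 : (0:ℝ) < (n:ℝ) := by linarith
    have hch : ((n.choose 2 : ℕ) : ℝ) = (n:ℝ) * ((n:ℝ) - 1) / 2 := Nat.cast_choose_two ℝ n
    have hch4 : (n:ℝ)^2 / 4 ≤ ((n.choose 2 : ℕ) : ℝ) := by rw [hch]; nlinarith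
    have hql : c₁ * (n:ℝ) ^ (2*(θ-1)) ≤ q n := (hq n).1
    have hrp : (n:ℝ) ^ (2*(θ-1)) * (n:ℝ)^2 = (n:ℝ) ^ (2*θ) := by
      rw [← Real.rpow_natCast (n:ℝ) 2, ← Real.rpow_add hn0]
      norm_num
      ring_nf
    calc c₁/4 * (n:ℝ) ^ (2*θ) = (c₁ * (n:ℝ) ^ (2*(θ-1))) * ((n:ℝ)^2/4) := by
          rw [← hrp]; ring
      _ ≤ q n * ((n.choose 2 : ℕ) : ℝ) := by
          apply mul_le_mul hql hch4 (by positivity) (hq01 n).1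
      _ = kbar q n := rfl
  have hkto : Tendsto (kbar q) atTop atTop := by
    apply tendsto_atTop_mono' atTop hk_lb
    have h1 : Tendsto (fun x : ℝ => x ^ (2*θ)) atTop atTop := tendsto_rpow_atTop (by linarith)
    exact (h1.comp (tendsto_natCast_atTop_atTop (R := ℝ))).const_mul_atTop (by positivity)
  have hkbig : ∀ᶠ n in atTop, max (2/ε0) (2/δ) ≤ kbar q n := hkto.eventually_ge_atTop _
  have hpe8 : ∀ᶠ n in atTop, (∑ Ls : Fin (t n) → Finset (Fin n),
      D n Ls * erProb n (q n) (fun E => dec n Ls (fun i => covers E (Ls i)) ≠ E)) < 1/8 :=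
    hpe.eventually_lt_const (by norm_num)
  obtain ⟨n, hTn, hq0, hqh, hkb, hp⟩ :=
    (hcon.and_eventually (hq0pos.and (hqhalf.and (hkbig.and hpe8)))).exists
  -- notation at the chosen n
  set k : ℝ := kbar q n with hkdef
  set L : ℝ := Real.logb 2 (1 / q n) with hLdef
  have hq1 : q n ≤ 1 := by linarith
  have hk2e : 2/ε0 ≤ k := le_trans (le_max_left _ _) hkb
  have hk2d : 2/δ ≤ k := le_trans (le_max_right _ _) hkb
  have hkpos : 0 < k := lt_of_lt_of_le (by positivity) hk2d
  have hδk2 : 2 ≤ δ * k := by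
    rw [div_le_iff₀ hδ0] at hk2d; rw [mul_comm]; exact hk2d
  have hε0k2 : 2 ≤ ε0 * k := by
    rw [div_le_iff₀ hε0] at hk2e; rw [mul_comm]; exact hk2e
  have hlog2pos : (0:ℝ) < Real.log 2 := Real.log_pos (by norm_num)
  have hL1 : 1 ≤ L := by
    rw [hLdef, Real.logb, one_div, Real.log_inv]
    rw [le_div_iff₀ hlog2pos]
    have hlq : Real.log (q n) ≤ -Real.log 2 := by
      have h1 : Real.log (q n) ≤ Real.log (1/2) :=
        (Real.log_le_log_iff hq0 (by norm_num)).mpr hqh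
      rwa [one_div, Real.log_inv] at h1
    linarith only [hlq]
  have hkey := key_bound n (t n) (q n) δ hq0 hq1 hδ0 hδ1 (D n) (hD0 n) (hD1 n) (dec n)
  have hqcard : q n * (((allPairs n).card : ℕ) : ℝ) = k := by
    rw [allPairs_card, hkdef, kbar]
  rw [hqcard, ← hεdef] at hkey
  -- first term ≤ 1/4
  have he1 : (2:ℝ) ≤ Real.exp 1 := by linarith only [Real.add_one_le_exp 1]
  have he2 : Real.exp 2 = Real.exp 1 * Real.exp 1 := by rw [← Real.exp_add]; norm_num
  have h4e : (4:ℝ) ≤ Real.exp 2 := by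
    calc (4:ℝ) = 2 * 2 := by norm_num
      _ ≤ Real.exp 1 * Real.exp 1 :=
          mul_le_mul he1 he1 (by norm_num) (Real.exp_pos 1).le
      _ = Real.exp 2 := he2.symm
  have hterm1 : Real.exp (-ε0 * k) ≤ 1/4 := by
    have h1 : Real.exp (-ε0 * k) ≤ Real.exp (-(2:ℝ)) := by
      apply Real.exp_le_exp.mpr; linarith only [hε0k2]
    have h5 : Real.exp (-(2:ℝ)) ≤ 1/4 := by
      rw [Real.exp_neg, show (1:ℝ)/4 = 4⁻¹ by norm_num]
      exact inv_anti₀ (by norm_num) h4e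
    linarith only [h1, h5]
  -- second term ≤ 1/4
  have hLlog : L * Real.log 2 = -Real.log (q n) := by
    rw [hLdef, Real.logb, one_div, Real.log_inv]
    field_simp
  have hterm2 : (2:ℝ) ^ (t n) * q n ^ ((1-δ)*k) ≤ 1/4 := by
    have heq : (2:ℝ) ^ (t n) * q n ^ ((1-δ)*k)
        = Real.exp (((t n : ℝ) - (1-δ)*k*L) * Real.log 2) := by
      rw [Real.rpow_def_of_pos hq0]
      have h2t : (2:ℝ) ^ (t n) = Real.exp ((t n : ℝ) * Real.log 2) := by
        rw [Real.exp_nat_mul, Real.exp_log (by norm_num : (0:ℝ) < 2)]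
      rw [h2t, ← Real.exp_add]
      congr 1
      have hq' : Real.log (q n) = -(L * Real.log 2) := by rw [hLlog]; ring
      rw [hq']; ring
    rw [heq]
    have hkL0 : (0:ℝ) ≤ k * L := by
      have hL0 : (0:ℝ) ≤ L := by linarith only [hL1]
      exact mul_nonneg hkpos.le hL0
    have htlt : (t n : ℝ) < (1 - 2*δ) * (k * L) := by
      have h1 := hTn
      push_neg at h1
      have h6 : (1-η)*(k*L) ≤ (1-2*δ)*(k*L) :=
        mul_le_mul_of_nonneg_right (by linarith only [hηδ]) hkL0
      linarith only [h1, h6]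
    have h2 : (t n : ℝ) - (1-δ)*k*L ≤ -(2:ℝ) := by
      have e2 : (0:ℝ) ≤ δ*k*(L-1) :=
        mul_nonneg (mul_nonneg hδ0.le hkpos.le) (by linarith only [hL1])
      linarith only [htlt, hδk2, e2]
    have h3 : Real.exp (((t n:ℝ) - (1-δ)*k*L) * Real.log 2)
        ≤ Real.exp (-(2:ℝ) * Real.log 2) := by
      apply Real.exp_le_exp.mpr
      exact mul_le_mul_of_nonneg_right h2 hlog2pos.le
    have h4 : Real.exp (-(2:ℝ) * Real.log 2) = 1/4 := by
      rw [show -(2:ℝ)*Real.log 2 = -(2*Real.log 2) by ring, Real.exp_neg]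
      rw [two_mul, Real.exp_add, Real.exp_log (by norm_num : (0:ℝ)<2)]
      norm_num
    linarith only [h3, h4]
  linarith only [hkey, hterm1, hterm2, hp]

end
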